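/- Every graph that is a 5-cycle, 6-cycle, split graph, or member of class A, B, or C contains no induced wheel. -/

import Mathlib

open SimpleGraph

/-- `G` contains an induced copy of `H`. -/
def ContainsInduced {V W : Type*} (G : SimpleGraph V) (H : SimpleGraph W) : Prop :=
  ∃ f : W ↪ V, ∀ u v, G.Adj (f u) (f v) ↔ H.Adj u v

/-- The path on 5 vertices. -/
def path5 : SimpleGraph (Fin 5) :=
  SimpleGraph.fromRel (fun i j => (i : ℕ) + 1 = (j : ℕ))

/-- Two disjoint edges. -/
def twoK2 : SimpleGraph (Fin 4) :=
  SimpleGraph.fromRel (fun i j => (i = 0 ∧ j = 1) ∨ (i = 2 ∧ j = 3))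

/-- The cycle on `n` vertices (for `n ≥ 3`). -/
def cycG (n : ℕ) : SimpleGraph (Fin n) :=
  SimpleGraph.fromRel (fun i j => ((i : ℕ) + 1) % n = (j : ℕ))

/-- `G` contains an induced wheel: an induced (chordless) cycle of length at least 4
plus a vertex with at least three neighbors on the cycle. -/
def ContainsWheel {V : Type*} (G : SimpleGraph V) : Prop :=
  ∃ n : ℕ, 4 ≤ n ∧ ∃ (f : Fin n ↪ V) (hub : V),
    (∀ i, hub ≠ f i) ∧
    (∀ i j, G.Adj (f i) (f j) ↔ (cycG n).Adj i j) ∧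
    3 ≤ {i : Fin n | G.Adj hub (f i)}.ncard

/-- `G` contains an induced wheel on at most `k` vertices. -/
def ContainsWheelLE {V : Type*} (G : SimpleGraph V) (k : ℕ) : Prop :=
  ∃ n : ℕ, 4 ≤ n ∧ n + 1 ≤ k ∧ ∃ (f : Fin n ↪ V) (hub : V),
    (∀ i, hub ≠ f i) ∧
    (∀ i j, G.Adj (f i) (f j) ↔ (cycG n).Adj i j) ∧
    3 ≤ {i : Fin n | G.Adj hub (f i)}.ncard

/-- `s` is the vertex set of a hole (induced cycle of length at least 4) of `G`. -/
def IsHoleSet {V : Type*} (G : SimpleGraph V) (s : Set V) : Prop :=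
  ∃ n : ℕ, 4 ≤ n ∧ ∃ f : Fin n ↪ V, Set.range f = s ∧
    ∀ i j, G.Adj (f i) (f j) ↔ (cycG n).Adj i j

/-- `G` is a split graph: its vertex set partitions into a stable set and a clique. -/
def IsSplit {V : Type*} (G : SimpleGraph V) : Prop :=
  ∃ S K : Set V, (∀ v, v ∈ S ∨ v ∈ K) ∧ S ∩ K = ∅ ∧
    (∀ u ∈ S, ∀ v ∈ S, ¬G.Adj u v) ∧ G.IsClique K

/-- Class A (see Maffray, "Graphs with no induced wheel or antiwheel"). -/
def InClassA {V : Type*} (G : SimpleGraph V) : Prop :=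
  ∃ (a b c d e : V) (X : Set V),
    X.Nonempty ∧
    (∀ v : V, v = a ∨ v = b ∨ v = c ∨ v = d ∨ v = e ∨ v ∈ X) ∧
    a ∉ X ∧ b ∉ X ∧ c ∉ X ∧ d ∉ X ∧ e ∉ X ∧
    a ≠ b ∧ a ≠ c ∧ a ≠ d ∧ a ≠ e ∧ b ≠ c ∧ b ≠ d ∧ b ≠ e ∧ c ≠ d ∧ c ≠ e ∧ d ≠ e ∧
    G.Adj a b ∧ G.Adj b c ∧ G.Adj c d ∧ G.Adj d a ∧ ¬G.Adj a c ∧ ¬G.Adj b d ∧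
    G.IsClique X ∧
    (∀ u ∈ X, G.Adj u c ∧ G.Adj u d ∧ ¬G.Adj u a ∧ ¬G.Adj u b) ∧
    (∀ u ∈ X, G.Adj e u) ∧ ¬G.Adj e a ∧ ¬G.Adj e b ∧ ¬(G.Adj e c ∧ G.Adj e d)

/-- Class B. -/
def InClassB {V : Type*} (G : SimpleGraph V) : Prop :=
  ∃ (X Y Z W : Set V) (x y : V),
    (∀ v : V, v ∈ X ∨ v ∈ Y ∨ v ∈ Z ∨ v ∈ W) ∧
    X ∩ Y = ∅ ∧ X ∩ Z = ∅ ∧ X ∩ W = ∅ ∧ Y ∩ Z = ∅ ∧ Y ∩ W = ∅ ∧ Z ∩ W = ∅ ∧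
    (∀ u ∈ X, ∀ v ∈ X, ¬G.Adj u v) ∧ (∀ u ∈ Y, ∀ v ∈ Y, ¬G.Adj u v) ∧
    (∀ u ∈ Z, ∀ v ∈ Z, ¬G.Adj u v) ∧ (∀ u ∈ W, ∀ v ∈ W, ¬G.Adj u v) ∧
    x ∈ X ∧ y ∈ Y ∧
    (∃ x' ∈ X, x' ≠ x) ∧ (∃ y' ∈ Y, y' ≠ y) ∧
    (G.induce (X ∪ Y)).Connected ∧
    (¬∃ f : Fin 5 ↪ V, (∀ i, f i ∈ X ∪ Y) ∧
      ∀ i j, G.Adj (f i) (f j) ↔ path5.Adj i j) ∧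
    (∀ w ∈ W, ∀ v ∈ X ∪ Y ∪ Z, ¬G.Adj w v) ∧
    (∀ v ∈ Y, G.Adj x v) ∧ (∀ v ∈ X, G.Adj y v) ∧
    (∀ z ∈ Z, G.Adj z x ∧ G.Adj z y ∧ ∀ v ∈ X ∪ Y, v ≠ x → v ≠ y → ¬G.Adj z v)

/-- Class C. -/
def InClassC {V : Type*} (G : SimpleGraph V) : Prop :=
  ∃ (X Y : Set V) (x1 x2 y1 y2 : V),
    (∀ v : V, v ∈ X ∨ v ∈ Y) ∧ X ∩ Y = ∅ ∧
    G.IsClique X ∧ G.IsClique Y ∧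
    x1 ∈ X ∧ x2 ∈ X ∧ y1 ∈ Y ∧ y2 ∈ Y ∧ x1 ≠ x2 ∧ y1 ≠ y2 ∧
    (∀ u ∈ X, ∀ v ∈ Y, (G.Adj u v ↔ (u = x1 ∧ v = y1) ∨ (u = x2 ∧ v = y2)))


/-! ### Auxiliary lemmas -/

lemma cyc_adj {n : ℕ} (i j : Fin n) :
    (cycG n).Adj i j ↔ (i : ℕ) ≠ (j : ℕ) ∧
      ((i : ℕ) + 1 = (j : ℕ) ∨ (j : ℕ) + 1 = (i : ℕ) ∨
        ((i : ℕ) + 1 = n ∧ (j : ℕ) = 0) ∨ ((j : ℕ) + 1 = n ∧ (i : ℕ) = 0)) := by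
  have hi := i.isLt
  have hj := j.isLt
  have key : ∀ a b : Fin n, ((a : ℕ) + 1) % n = (b : ℕ) ↔
      ((a : ℕ) + 1 = (b : ℕ) ∨ ((a : ℕ) + 1 = n ∧ (b : ℕ) = 0)) := by
    intro a b
    have ha := a.isLt
    rcases Nat.lt_or_ge ((a:ℕ)+1) n with h | h
    · rw [Nat.mod_eq_of_lt h]
      omega
    · have h' : (a:ℕ) + 1 = n := by omega
      rw [h', Nat.mod_self]
      have := b.isLt
      omega
  rw [cycG, SimpleGraph.fromRel_adj, key, key, Fin.ne_iff_vne]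
  tauto

lemma path5_adj (i j : Fin 5) :
    path5.Adj i j ↔ (i : ℕ) ≠ (j : ℕ) ∧ ((i : ℕ) + 1 = (j : ℕ) ∨ (j : ℕ) + 1 = (i : ℕ)) := by
  rw [path5, SimpleGraph.fromRel_adj, Fin.ne_iff_vne]

/-- the cycle has no triangles for `n ≥ 4` -/
lemma cyc_no_tri {n : ℕ} (hn : 4 ≤ n) {i j k : Fin n}
    (hij : (cycG n).Adj i j) (hjk : (cycG n).Adj j k) (hik : (cycG n).Adj i k) : False := by
  rw [cyc_adj] at hij hjk hik
  have hi := i.isLt; have hj := j.isLt; have hk := k.isLt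
  omega

/-- every vertex of the cycle has two nonadjacent neighbors -/
lemma cyc_two_nbrs {n : ℕ} (hn : 4 ≤ n) (i : Fin n) :
    ∃ j k : Fin n, j ≠ k ∧ i ≠ j ∧ i ≠ k ∧ (cycG n).Adj i j ∧ (cycG n).Adj i k ∧
      ¬(cycG n).Adj j k := by
  have hi := i.isLt
  by_cases h1 : (i:ℕ)+1 = n <;> by_cases h2 : (i:ℕ) = 0
  · exfalso; omega
  · refine ⟨⟨0, by omega⟩, ⟨(i:ℕ)-1, by omega⟩, ?_, ?_, ?_, ?_, ?_, ?_⟩ <;>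
      simp only [cyc_adj, Fin.ne_iff_vne, Fin.val_mk, not_and, not_or, and_true, true_and,
        or_true, true_or] <;> omega
  · refine ⟨⟨(i:ℕ)+1, by omega⟩, ⟨n-1, by omega⟩, ?_, ?_, ?_, ?_, ?_, ?_⟩ <;>
      simp only [cyc_adj, Fin.ne_iff_vne, Fin.val_mk, not_and, not_or, and_true, true_and,
        or_true, true_or] <;> omega
  · refine ⟨⟨(i:ℕ)+1, by omega⟩, ⟨(i:ℕ)-1, by omega⟩, ?_, ?_, ?_, ?_, ?_, ?_⟩ <;>
      simp only [cyc_adj, Fin.ne_iff_vne, Fin.val_mk, not_and, not_or, and_true, true_and,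
        or_true, true_or] <;> omega

/-- among any three distinct vertices of a 4-cycle, two are adjacent -/
lemma fin4_pair {n : ℕ} (hn : n = 4) {i j k : Fin n} (hij : i ≠ j) (hik : i ≠ k) (hjk : j ≠ k) :
    (cycG n).Adj i j ∨ (cycG n).Adj i k ∨ (cycG n).Adj j k := by
  rw [Fin.ne_iff_vne] at hij hik hjk
  have hi := i.isLt; have hj := j.isLt; have hk := k.isLt
  simp only [cyc_adj]
  omega

lemma cycG_not_wheel (m : ℕ) : ¬ContainsWheel (cycG m) := by
  rintro ⟨n, hn, f, hub, hhub, hf, hcard⟩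
  have h3 : 2 < {i : Fin n | (cycG m).Adj hub (f i)}.ncard := hcard
  rw [Set.two_lt_ncard (Set.toFinite _)] at h3
  obtain ⟨a, ha, b, hb, c, hc, hab, hac, hbc⟩ := h3
  simp only [Set.mem_setOf_eq, cyc_adj] at ha hb hc
  have h1 : (f a : ℕ) ≠ (f b : ℕ) := by
    simp [Fin.val_eq_val, f.apply_eq_iff_eq, hab]
  have h2 : (f a : ℕ) ≠ (f c : ℕ) := by
    simp [Fin.val_eq_val, f.apply_eq_iff_eq, hac]
  have h4 : (f b : ℕ) ≠ (f c : ℕ) := by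
    simp [Fin.val_eq_val, f.apply_eq_iff_eq, hbc]
  have := (f a).isLt; have := (f b).isLt; have := (f c).isLt; have := hub.isLt
  omega

lemma wheel_of_iso {V W : Type*} {G : SimpleGraph V} {H : SimpleGraph W} (e : G ≃g H)
    (hw : ContainsWheel G) : ContainsWheel H := by
  obtain ⟨n, hn, f, hub, hhub, hf, hcard⟩ := hw
  refine ⟨n, hn, f.trans e.toEquiv.toEmbedding, e hub, ?_, ?_, ?_⟩
  · intro i h
    exact hhub i (e.toEquiv.injective h)
  · intro i j
    simp only [Function.Embedding.trans_apply, Equiv.coe_toEmbedding]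
    exact Iff.trans e.map_adj_iff (hf i j)
  · have hset : {i : Fin n | H.Adj (e hub) ((f.trans e.toEquiv.toEmbedding) i)} =
        {i : Fin n | G.Adj hub (f i)} := by
      ext i
      simp only [Set.mem_setOf_eq, Function.Embedding.trans_apply, Equiv.coe_toEmbedding]
      exact e.map_adj_iff
    rw [hset]
    exact hcard

lemma get_three {V : Type*} {G : SimpleGraph V} {n : ℕ} {f : Fin n ↪ V} {hub : V}
    (h : 3 ≤ {i : Fin n | G.Adj hub (f i)}.ncard) :
    ∃ i1 i2 i3 : Fin n, i1 ≠ i2 ∧ i1 ≠ i3 ∧ i2 ≠ i3 ∧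
      G.Adj hub (f i1) ∧ G.Adj hub (f i2) ∧ G.Adj hub (f i3) := by
  have h3 : 2 < {i : Fin n | G.Adj hub (f i)}.ncard := h
  rw [Set.two_lt_ncard (Set.toFinite _)] at h3
  obtain ⟨a, ha, b, hb, c, hc, hab, hac, hbc⟩ := h3
  exact ⟨a, b, c, hab, hac, hbc, ha, hb, hc⟩

/-- if some hole vertex has all its hole-neighbors inside a clique, contradiction -/
lemma hole_no_clique {V : Type*} {G : SimpleGraph V} {n : ℕ} (hn : 4 ≤ n) (f : Fin n ↪ V)
    (hf : ∀ i j, G.Adj (f i) (f j) ↔ (cycG n).Adj i j) (i : Fin n) (Q : Set V)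
    (hQ : G.IsClique Q) (hnb : ∀ j : Fin n, G.Adj (f i) (f j) → f j ∈ Q) : False := by
  obtain ⟨j, k, hjk, hij, hik, aij, aik, najk⟩ := cyc_two_nbrs hn i
  have h1 : G.Adj (f i) (f j) := (hf i j).2 aij
  have h2 : G.Adj (f i) (f k) := (hf i k).2 aik
  have hne : f j ≠ f k := fun h => hjk (f.injective h)
  exact najk ((hf j k).1 (hQ (hnb j h1) (hnb k h2) hne))

/-- three distinct hole vertices cannot lie in a common clique -/
lemma three_in_clique {V : Type*} {G : SimpleGraph V} {n : ℕ} (hn : 4 ≤ n) (f : Fin n ↪ V)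
    (hf : ∀ i j, G.Adj (f i) (f j) ↔ (cycG n).Adj i j) {Q : Set V} (hQ : G.IsClique Q)
    {i1 i2 i3 : Fin n} (d12 : i1 ≠ i2) (d13 : i1 ≠ i3) (d23 : i2 ≠ i3)
    (m1 : f i1 ∈ Q) (m2 : f i2 ∈ Q) (m3 : f i3 ∈ Q) : False := by
  have a12 := (hf i1 i2).1 (hQ m1 m2 (fun h => d12 (f.injective h)))
  have a13 := (hf i1 i3).1 (hQ m1 m3 (fun h => d13 (f.injective h)))
  have a23 := (hf i2 i3).1 (hQ m2 m3 (fun h => d23 (f.injective h)))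
  exact cyc_no_tri hn a12 a23 a13

/-- three distinct hole vertices cannot all lie in a two-element set -/
lemma three_in_pair {V : Type*} {n : ℕ} (f : Fin n ↪ V)
    {i1 i2 i3 : Fin n} (d12 : i1 ≠ i2) (d13 : i1 ≠ i3) (d23 : i2 ≠ i3) {u v : V}
    (h1 : f i1 = u ∨ f i1 = v) (h2 : f i2 = u ∨ f i2 = v) (h3 : f i3 = u ∨ f i3 = v) :
    False := by
  have e12 : f i1 ≠ f i2 := fun h => d12 (f.injective h)
  have e13 : f i1 ≠ f i3 := fun h => d13 (f.injective h)
  have e23 : f i2 ≠ f i3 := fun h => d23 (f.injective h)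
  rcases h1 with h1 | h1 <;> rcases h2 with h2 | h2 <;> rcases h3 with h3 | h3 <;> simp_all

theorem stmt_17 {V : Type*} (G : SimpleGraph V)
    (hG : Nonempty (G ≃g cycG 5) ∨ Nonempty (G ≃g cycG 6) ∨ IsSplit G ∨
      InClassA G ∨ InClassB G ∨ InClassC G) :
    ¬ContainsWheel G := by
  obtain ⟨e⟩ | ⟨e⟩ | hsplit | hA | hB | hC := hG
  · intro hw
    obtain ⟨e'⟩ := e
    exact cycG_not_wheel 5 (wheel_of_iso e' hw)
  · intro hw
    obtain ⟨e'⟩ := e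
    exact cycG_not_wheel 6 (wheel_of_iso e' hw)
  · -- split graphs
    rintro ⟨n, hn, f, hub, hhub, hf, hcard⟩
    obtain ⟨S, K, hall, hdisj, hS, hK⟩ := hsplit
    have edge : ∀ i j : Fin n, (cycG n).Adj i j → f i ∈ S → f j ∈ S → False := by
      intro i j hij h1 h2
      exact hS _ h1 _ h2 ((hf i j).2 hij)
    have nonK : ∀ i j : Fin n, i ≠ j → ¬(cycG n).Adj i j → f i ∈ K → f j ∈ K → False := by
      intro i j hij hna h1 h2
      exact hna ((hf i j).1 (hK h1 h2 (fun h => hij (f.injective h))))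
    have inK : ∀ i j : Fin n, (cycG n).Adj i j → f i ∈ S → f j ∈ K := by
      intro i j hij h1
      rcases hall (f j) with h | h
      · exact absurd h (fun h => edge i j hij h1 h)
      · exact h
    have h1case : f ⟨1, by omega⟩ ∈ S → False := by
      intro h1S
      have h0 : f ⟨0, by omega⟩ ∈ K := inK ⟨1, by omega⟩ _ (by simp [cyc_adj] <;> omega) h1S
      have h2 : f ⟨2, by omega⟩ ∈ K := inK ⟨1, by omega⟩ _ (by simp [cyc_adj] <;> omega) h1S
      exact nonK ⟨0, by omega⟩ ⟨2, by omega⟩ (by simp [Fin.ne_iff_vne])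
        (by simp [cyc_adj] <;> omega) h0 h2
    have h1K : f ⟨1, by omega⟩ ∈ K := by
      rcases hall (f ⟨1, by omega⟩) with h | h
      · exact absurd h h1case
      · exact h
    have h3S : f ⟨3, by omega⟩ ∈ S := by
      rcases hall (f ⟨3, by omega⟩) with h | h
      · exact h
      · exact absurd h (fun h => nonK ⟨1, by omega⟩ ⟨3, by omega⟩
          (by simp [Fin.ne_iff_vne]) (by simp [cyc_adj] <;> omega) h1K h)
    have h2K : f ⟨2, by omega⟩ ∈ K := inK ⟨3, by omega⟩ _ (by simp [cyc_adj] <;> omega) h3S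
    rcases Nat.lt_or_ge n 5 with h5 | h5
    · -- n = 4 : vertex 0 is adjacent to vertex 3
      have h0K : f ⟨0, by omega⟩ ∈ K := inK ⟨3, by omega⟩ _ (by simp [cyc_adj] <;> omega) h3S
      exact nonK ⟨0, by omega⟩ ⟨2, by omega⟩ (by simp [Fin.ne_iff_vne])
        (by simp [cyc_adj] <;> omega) h0K h2K
    · -- n ≥ 5 : vertex 4 is adjacent to vertex 3
      have h4K : f ⟨4, by omega⟩ ∈ K := inK ⟨3, by omega⟩ _ (by simp [cyc_adj] <;> omega) h3S
      exact nonK ⟨2, by omega⟩ ⟨4, by omega⟩ (by simp [Fin.ne_iff_vne])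
        (by simp [cyc_adj] <;> omega) h2K h4K
  · -- class A
    rintro ⟨n, hn, f, hub, hhub, hf, hcard⟩
    obtain ⟨a, b, c, d, e, X, hXne, hall, haX, hbX, hcX, hdX, heX, hab, hac, had, hae, hbc,
      hbd, hbe, hcd, hce, hde, Aab, Abc, Acd, Ada, nac, nbd, hXcl, hXadj, heXadj, nea, neb,
      necd⟩ := hA
    obtain ⟨i1, i2, i3, d12, d13, d23, a1, a2, a3⟩ := get_three hcard
    have hQ : G.IsClique (insert c (insert d X)) := by
      intro u hu v hv huv
      simp only [Set.mem_insert_iff] at hu hv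
      rcases hu with rfl | rfl | hu <;> rcases hv with rfl | rfl | hv
      · exact absurd rfl huv
      · exact Acd
      · exact ((hXadj v hv).1).symm
      · exact Acd.symm
      · exact absurd rfl huv
      · exact ((hXadj v hv).2.1).symm
      · exact (hXadj u hu).1
      · exact (hXadj u hu).2.1
      · exact hXcl hu hv huv
    have hQd : G.IsClique (insert d X) :=
      hQ.subset (fun v hv => by simp only [Set.mem_insert_iff] at hv ⊢; tauto)
    have hQc : G.IsClique (insert c X) :=
      hQ.subset (fun v hv => by simp only [Set.mem_insert_iff] at hv ⊢; tauto)
    have Na : ∀ v, G.Adj a v → v = b ∨ v = d := by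
      intro v hv
      rcases hall v with rfl | rfl | rfl | rfl | rfl | hX
      · exact absurd rfl hv.ne
      · exact Or.inl rfl
      · exact absurd hv nac
      · exact Or.inr rfl
      · exact absurd hv.symm nea
      · exact absurd hv.symm ((hXadj v hX).2.2.1)
    have Nb : ∀ v, G.Adj b v → v = a ∨ v = c := by
      intro v hv
      rcases hall v with rfl | rfl | rfl | rfl | rfl | hX
      · exact Or.inl rfl
      · exact absurd rfl hv.ne
      · exact Or.inr rfl
      · exact absurd hv nbd
      · exact absurd hv.symm neb
      · exact absurd hv.symm ((hXadj v hX).2.2.2)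
    have Ne : ∀ v, G.Adj e v → v ∈ insert c (insert d X) := by
      intro v hv
      rcases hall v with rfl | rfl | rfl | rfl | rfl | hX
      · exact absurd hv nea
      · exact absurd hv neb
      · simp
      · simp
      · exact absurd rfl hv.ne
      · simp [hX]
    have Nc : ∀ v, G.Adj c v → v = b ∨ v = e ∨ v ∈ insert d X := by
      intro v hv
      rcases hall v with rfl | rfl | rfl | rfl | rfl | hX
      · exact absurd hv.symm nac
      · exact Or.inl rfl
      · exact absurd rfl hv.ne
      · exact Or.inr (Or.inr (by simp))
      · exact Or.inr (Or.inl rfl)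
      · exact Or.inr (Or.inr (by simp [hX]))
    have Nd : ∀ v, G.Adj d v → v = a ∨ v = e ∨ v ∈ insert c X := by
      intro v hv
      rcases hall v with rfl | rfl | rfl | rfl | rfl | hX
      · exact Or.inl rfl
      · exact absurd hv.symm nbd
      · exact Or.inr (Or.inr (by simp))
      · exact absurd rfl hv.ne
      · exact Or.inr (Or.inl rfl)
      · exact Or.inr (Or.inr (by simp [hX]))
    have NX : ∀ u, u ∈ X → ∀ v, G.Adj u v → v = e ∨ v ∈ insert c (insert d X) := by
      intro u hu v hv
      rcases hall v with rfl | rfl | rfl | rfl | rfl | hX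
      · exact absurd hv ((hXadj u hu).2.2.1)
      · exact absurd hv ((hXadj u hu).2.2.2)
      · exact Or.inr (by simp)
      · exact Or.inr (by simp)
      · exact Or.inl rfl
      · exact Or.inr (by simp [hX])
    have note : ∀ i : Fin n, f i ≠ e := by
      intro i hie
      exact hole_no_clique hn f hf i _ hQ (fun j hj => Ne _ (by rwa [hie] at hj))
    rcases hall hub with rfl | rfl | rfl | rfl | rfl | hhX
    · exact three_in_pair f d12 d13 d23 (Na _ a1) (Na _ a2) (Na _ a3)
    · exact three_in_pair f d12 d13 d23 (Nb _ a1) (Nb _ a2) (Nb _ a3)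
    · -- hub = c
      have notb : ∀ i : Fin n, f i ≠ b := by
        intro i hib
        refine hole_no_clique hn f hf i {a} (Set.pairwise_singleton _ _) (fun j hj => ?_)
        rcases Nb _ (by rwa [hib] at hj) with h | h
        · simp [h]
        · exact absurd h.symm (hhub j)
      have key : ∀ i : Fin n, G.Adj hub (f i) → f i ∈ insert d X := by
        intro i hi
        rcases Nc _ hi with h | h | h
        · exact absurd h (notb i)
        · exact absurd h (note i)
        · exact h
      exact three_in_clique hn f hf hQd d12 d13 d23 (key _ a1) (key _ a2) (key _ a3)
    · -- hub = d
      have nota : ∀ i : Fin n, f i ≠ a := by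
        intro i hia
        refine hole_no_clique hn f hf i {b} (Set.pairwise_singleton _ _) (fun j hj => ?_)
        rcases Na _ (by rwa [hia] at hj) with h | h
        · simp [h]
        · exact absurd h.symm (hhub j)
      have key : ∀ i : Fin n, G.Adj hub (f i) → f i ∈ insert c X := by
        intro i hi
        rcases Nd _ hi with h | h | h
        · exact absurd h (nota i)
        · exact absurd h (note i)
        · exact h
      exact three_in_clique hn f hf hQc d12 d13 d23 (key _ a1) (key _ a2) (key _ a3)
    · -- hub = e
      exact three_in_clique hn f hf hQ d12 d13 d23 (Ne _ a1) (Ne _ a2) (Ne _ a3)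
    · -- hub ∈ X
      have key : ∀ i : Fin n, G.Adj hub (f i) → f i ∈ insert c (insert d X) := by
        intro i hi
        rcases NX _ hhX _ hi with h | h
        · exact absurd h (note i)
        · exact h
      exact three_in_clique hn f hf hQ d12 d13 d23 (key _ a1) (key _ a2) (key _ a3)
  · -- class B
    rintro ⟨n, hn, f, hub, hhub, hf, hcard⟩
    obtain ⟨X, Y, Z, W, x, y, hall, dXY, dXZ, dXW, dYZ, dYW, dZW, sX, sY, sZ, sW, hxX, hyY,
      hx2, hy2, hconn, hP5, hWanti, hxY, hyX, hZ⟩ := hB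
    obtain ⟨i1, i2, i3, d12, d13, d23, a1, a2, a3⟩ := get_three hcard
    have Axy : G.Adj x y := hxY y hyY
    have dxyF : ∀ v, v ∈ X → v ∈ Y → False := by
      intro v h1 h2
      have h3 : v ∈ X ∩ Y := ⟨h1, h2⟩
      rw [dXY] at h3
      exact h3
    have NW : ∀ w ∈ W, ∀ v, ¬G.Adj w v := by
      intro w hw v hv
      rcases hall v with h | h | h | h
      · exact hWanti w hw v (Set.mem_union_left _ (Set.mem_union_left _ h)) hv
      · exact hWanti w hw v (Set.mem_union_left _ (Set.mem_union_right _ h)) hv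
      · exact hWanti w hw v (Set.mem_union_right _ h) hv
      · exact sW w hw v h hv
    have NZ : ∀ z ∈ Z, ∀ v, G.Adj z v → v = x ∨ v = y := by
      intro z hz v hv
      rcases hall v with h | h | h | h
      · by_cases hvx : v = x
        · exact Or.inl hvx
        · by_cases hvy : v = y
          · exact Or.inr hvy
          · exact absurd hv ((hZ z hz).2.2 v (Set.mem_union_left _ h) hvx hvy)
      · by_cases hvx : v = x
        · exact Or.inl hvx
        · by_cases hvy : v = y
          · exact Or.inr hvy
          · exact absurd hv ((hZ z hz).2.2 v (Set.mem_union_right _ h) hvx hvy)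
      · exact absurd hv (sZ z hz v h)
      · exact absurd hv.symm (hWanti v h z (Set.mem_union_right _ hz))
    have notW : ∀ i : Fin n, f i ∉ W := by
      intro i hiw
      exact hole_no_clique hn f hf i ∅ (Set.pairwise_empty _)
        (fun j hj => absurd hj (NW _ hiw _))
    have cliquexy : G.IsClique {x, y} := by
      intro u hu v hv hne
      simp only [Set.mem_insert_iff, Set.mem_singleton_iff] at hu hv
      rcases hu with rfl | rfl <;> rcases hv with rfl | rfl
      · exact absurd rfl hne
      · exact Axy
      · exact Axy.symm
      · exact absurd rfl hne
    have notZ : ∀ i : Fin n, f i ∉ Z := by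
      intro i hiz
      refine hole_no_clique hn f hf i {x, y} cliquexy (fun j hj => ?_)
      rcases NZ _ hiz _ hj with h | h <;> simp [h]
    have hXY : ∀ i : Fin n, f i ∈ X ∨ f i ∈ Y := by
      intro i
      rcases hall (f i) with h | h | h | h
      · exact Or.inl h
      · exact Or.inr h
      · exact absurd h (notZ i)
      · exact absurd h (notW i)
    have step : ∀ i j : Fin n, (cycG n).Adj i j →
        ((f i ∈ X → f j ∈ Y) ∧ (f i ∈ Y → f j ∈ X)) := by
      intro i j hc
      have hadj := (hf i j).2 hc
      constructor
      · intro hX'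
        rcases hXY j with h | h
        · exact absurd hadj (sX _ hX' _ h)
        · exact h
      · intro hY'
        rcases hXY j with h | h
        · exact h
        · exact absurd hadj (sY _ hY' _ h)
    rcases Nat.lt_or_ge n 6 with h6 | h6
    · rcases Nat.lt_or_ge n 5 with h5 | h5
      · -- n = 4
        have contra2 : ∀ (P : Set V), (∀ u ∈ P, ∀ v ∈ P, ¬G.Adj u v) →
            (∀ i : Fin n, G.Adj hub (f i) → f i ∈ P) → False := by
          intro P hP key
          rcases fin4_pair (by omega) d12 d13 d23 with hc | hc | hc
          · exact hP _ (key _ a1) _ (key _ a2) ((hf i1 i2).2 hc)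
          · exact hP _ (key _ a1) _ (key _ a3) ((hf i1 i3).2 hc)
          · exact hP _ (key _ a2) _ (key _ a3) ((hf i2 i3).2 hc)
        rcases hall hub with h | h | h | h
        · refine contra2 Y sY (fun i hi => ?_)
          rcases hXY i with h' | h'
          · exact absurd hi (sX _ h _ h')
          · exact h'
        · refine contra2 X sX (fun i hi => ?_)
          rcases hXY i with h' | h'
          · exact h'
          · exact absurd hi (sY _ h _ h')
        · exact three_in_pair f d12 d13 d23 (NZ _ h _ a1) (NZ _ h _ a2) (NZ _ h _ a3)
        · exact NW _ h _ a1
      · -- n = 5 : odd hole in a bipartite graph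
        have c01 : (cycG n).Adj ⟨0, by omega⟩ ⟨1, by omega⟩ := by simp [cyc_adj] <;> omega
        have c12 : (cycG n).Adj ⟨1, by omega⟩ ⟨2, by omega⟩ := by simp [cyc_adj] <;> omega
        have c23 : (cycG n).Adj ⟨2, by omega⟩ ⟨3, by omega⟩ := by simp [cyc_adj] <;> omega
        have c34 : (cycG n).Adj ⟨3, by omega⟩ ⟨4, by omega⟩ := by simp [cyc_adj] <;> omega
        have c40 : (cycG n).Adj ⟨4, by omega⟩ ⟨0, by omega⟩ := by simp [cyc_adj] <;> omega
        rcases hXY ⟨0, by omega⟩ with h0 | h0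
        · exact dxyF _ h0 ((step _ _ c40).1 ((step _ _ c34).2 ((step _ _ c23).1
            ((step _ _ c12).2 ((step _ _ c01).1 h0)))))
        · exact dxyF _ ((step _ _ c40).2 ((step _ _ c34).1 ((step _ _ c23).2
            ((step _ _ c12).1 ((step _ _ c01).2 h0))))) h0
    · -- n ≥ 6 : the hole contains an induced P5
      apply hP5
      refine ⟨⟨fun i => f ⟨(i : ℕ), by omega⟩, ?_⟩, ?_, ?_⟩
      · intro i j hij
        have h2 := f.injective hij
        have h3 : (i : ℕ) = (j : ℕ) := by
          have := congrArg Fin.val h2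
          simpa using this
        exact Fin.ext h3
      · intro i
        rcases hXY ⟨(i : ℕ), by omega⟩ with h | h
        · exact Set.mem_union_left _ h
        · exact Set.mem_union_right _ h
      · intro i j
        show G.Adj (f ⟨(i : ℕ), by omega⟩) (f ⟨(j : ℕ), by omega⟩) ↔ path5.Adj i j
        rw [hf, cyc_adj, path5_adj]
        have hi := i.isLt
        have hj := j.isLt
        simp only [Fin.val_mk]
        omega
  · -- class C
    rintro ⟨n, hn, f, hub, hhub, hf, hcard⟩
    obtain ⟨X, Y, x1, x2, y1, y2, hall, dXY, hXcl, hYcl, hx1, hx2, hy1, hy2, hx12, hy12,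
      hcross⟩ := hC
    obtain ⟨i1, i2, i3, d12, d13, d23, a1, a2, a3⟩ := get_three hcard
    rcases hall hub with hX | hY
    · have key : ∀ i : Fin n, G.Adj hub (f i) → f i ∈ X := by
        intro i hi
        rcases hall (f i) with h | h
        · exact h
        · exfalso
          rcases (hcross hub hX (f i) h).1 hi with ⟨e1, e2⟩ | ⟨e1, e2⟩
          · refine hole_no_clique hn f hf i Y hYcl (fun j hj => ?_)
            rcases hall (f j) with h' | h'
            · exfalso
              rcases (hcross (f j) h' (f i) h).1 hj.symm with ⟨g1, g2⟩ | ⟨g1, g2⟩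
              · exact hhub j (e1.trans g1.symm)
              · exact hy12 (e2.symm.trans g2)
            · exact h'
          · refine hole_no_clique hn f hf i Y hYcl (fun j hj => ?_)
            rcases hall (f j) with h' | h'
            · exfalso
              rcases (hcross (f j) h' (f i) h).1 hj.symm with ⟨g1, g2⟩ | ⟨g1, g2⟩
              · exact hy12 (g2.symm.trans e2)
              · exact hhub j (e1.trans g1.symm)
            · exact h'
      exact three_in_clique hn f hf hXcl d12 d13 d23 (key _ a1) (key _ a2) (key _ a3)
    · have key : ∀ i : Fin n, G.Adj hub (f i) → f i ∈ Y := by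
        intro i hi
        rcases hall (f i) with h | h
        · exfalso
          rcases (hcross (f i) h hub hY).1 hi.symm with ⟨e1, e2⟩ | ⟨e1, e2⟩
          · refine hole_no_clique hn f hf i X hXcl (fun j hj => ?_)
            rcases hall (f j) with h' | h'
            · exact h'
            · exfalso
              rcases (hcross (f i) h (f j) h').1 hj with ⟨g1, g2⟩ | ⟨g1, g2⟩
              · exact hhub j (e2.trans g2.symm)
              · exact hx12 (g1.symm.trans e1).symm
          · refine hole_no_clique hn f hf i X hXcl (fun j hj => ?_)
            rcases hall (f j) with h' | h'
            · exact h'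
            · exfalso
              rcases (hcross (f i) h (f j) h').1 hj with ⟨g1, g2⟩ | ⟨g1, g2⟩
              · exact hx12 (g1.symm.trans e1)
              · exact hhub j (e2.trans g2.symm)
        · exact h
      exact three_in_clique hn f hf hYcl d12 d13 d23 (key _ a1) (key _ a2) (key _ a3)
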